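/- If G is a finite connected simple graph which is not a path, not a cycle, and not the claw K_{1,3}, then there exists an integer k such that the k-th iterated line graph satisfies δ(L^k(G)) ≥ 3. -/

import Mathlib

open SimpleGraph

universe u

/-- The iterated line graph: `iterLineGraph G k` is `L^k(G)` together with its vertex type,
with `L^0(G) = G`. -/
def iterLineGraph {V : Type u} (G : SimpleGraph V) : ℕ → Σ W : Type u, SimpleGraph W
  | 0 => ⟨V, G⟩
  | k + 1 => ⟨(iterLineGraph G k).2.edgeSet, (iterLineGraph G k).2.lineGraph⟩

namespace IterLG

noncomputable def deg {V : Type u} (G : SimpleGraph V) (v : V) : ℕ := (G.neighborSet v).ncard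

variable {V : Type u} {G : SimpleGraph V} {u v x y : V} {f : Sym2 V}

lemma mem_closed (hconn : G.Connected) {S : Set V}
    (hcl : ∀ ⦃a b⦄, G.Adj a b → a ∈ S → b ∈ S) {v : V} (hv : v ∈ S) (w : V) : w ∈ S := by
  suffices h : ∀ {a b : V}, G.Walk a b → a ∈ S → b ∈ S from
    h ((hconn v w).some) hv
  intro a b p
  induction p with
  | nil => exact id
  | cons hadj _ ih => exact fun ha => ih (hcl hadj ha)

lemma one_le_deg [Finite V] (h : G.Adj u v) : 1 ≤ deg G u := by
  have : (G.neighborSet u).Nonempty := ⟨v, h⟩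
  exact (Set.ncard_pos (Set.toFinite _)).mpr this

lemma neighborSet_eq_pair [Finite V] (hdeg : deg G v ≤ 2) (hx : G.Adj v x) (hy : G.Adj v y)
    (hxy : x ≠ y) : G.neighborSet v = {x, y} := by
  refine (Set.eq_of_subset_of_ncard_le ?_ ?_ (Set.toFinite _)).symm
  · rintro z (rfl | rfl) <;> simpa
  · rwa [Set.ncard_pair hxy]

lemma neighborSet_eq_singleton [Finite V] (hdeg : deg G v ≤ 1) (hx : G.Adj v x) :
    G.neighborSet v = {x} := by
  refine (Set.eq_of_subset_of_ncard_le ?_ ?_ (Set.toFinite _)).symm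
  · rintro z rfl; simpa
  · rw [Set.ncard_singleton]; exact hdeg

lemma edge_eq (hf : f ∈ G.edgeSet) (hx : x ∈ f) : ∃ y, f = s(x, y) ∧ G.Adj x y := by
  obtain ⟨y, rfl⟩ := Sym2.mem_iff_exists.mp hx
  exact ⟨y, rfl, hf⟩

lemma edge_eq_of_two_mem (hx : x ∈ f) (hy : y ∈ f) (hxy : x ≠ y) : f = s(x, y) := by
  induction f with
  | _ a b =>
    rw [Sym2.mem_iff] at hx hy
    rcases hx with rfl | rfl <;> rcases hy with rfl | rfl <;>
      first
        | exact absurd rfl hxy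
        | rfl
        | exact Sym2.eq_swap

lemma edgesAt_eq (G : SimpleGraph V) (x : V) :
    {f : Sym2 V | f ∈ G.edgeSet ∧ x ∈ f} = (fun w => s(x, w)) '' G.neighborSet x := by
  ext f
  constructor
  · rintro ⟨hf, hx⟩
    obtain ⟨y, rfl, hadj⟩ := edge_eq hf hx
    exact ⟨y, hadj, rfl⟩
  · rintro ⟨y, hy, rfl⟩
    exact ⟨hy, Sym2.mem_mk_left _ _⟩

lemma ncard_edgesAt (G : SimpleGraph V) (x : V) :
    {f : Sym2 V | f ∈ G.edgeSet ∧ x ∈ f}.ncard = deg G x := by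
  rw [edgesAt_eq, Set.ncard_image_of_injective _ fun a b h => Sym2.congr_right.mp h, deg]

section LG

variable {V : Type u} {G : SimpleGraph V} {u v x y : V} {f : Sym2 V}

lemma exists_mem_sym2 (z : Sym2 V) : ∃ x, x ∈ z := by
  induction z with
  | _ a b => exact ⟨a, Sym2.mem_mk_left _ _⟩

lemma ncard_lineGraph_neighborSet [Finite V] {u v : V} (he : s(u, v) ∈ G.edgeSet) :
    (G.lineGraph.neighborSet ⟨s(u, v), he⟩).ncard = deg G u + deg G v - 2 := by
  have h : G.Adj u v := G.mem_edgeSet.mp he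
  have hval : Subtype.val '' (G.lineGraph.neighborSet ⟨s(u, v), he⟩)
      = ({f : Sym2 V | f ∈ G.edgeSet ∧ u ∈ f} \ {s(u, v)}) ∪
        ({f : Sym2 V | f ∈ G.edgeSet ∧ v ∈ f} \ {s(u, v)}) := by
    ext f
    constructor
    · rintro ⟨⟨f', hf'⟩, hmem, rfl⟩
      rw [SimpleGraph.mem_neighborSet, SimpleGraph.lineGraph_adj_iff_exists] at hmem
      obtain ⟨hne, x, hx1, hx2⟩ := hmem
      have hne' : f' ≠ s(u, v) := fun hh => hne (Subtype.ext hh.symm)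
      rcases Sym2.mem_iff.mp hx1 with rfl | rfl
      · exact Or.inl ⟨⟨hf', hx2⟩, hne'⟩
      · exact Or.inr ⟨⟨hf', hx2⟩, hne'⟩
    · rintro (⟨⟨hfE, hu⟩, hne⟩ | ⟨⟨hfE, hv⟩, hne⟩)
      · refine ⟨⟨f, hfE⟩, ?_, rfl⟩
        rw [SimpleGraph.mem_neighborSet, SimpleGraph.lineGraph_adj_iff_exists]
        exact ⟨fun hh => hne (congrArg Subtype.val hh).symm, u, Sym2.mem_mk_left _ _, hu⟩
      · refine ⟨⟨f, hfE⟩, ?_, rfl⟩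
        rw [SimpleGraph.mem_neighborSet, SimpleGraph.lineGraph_adj_iff_exists]
        exact ⟨fun hh => hne (congrArg Subtype.val hh).symm, v, Sym2.mem_mk_right _ _, hv⟩
  have hdisj : Disjoint ({f : Sym2 V | f ∈ G.edgeSet ∧ u ∈ f} \ {s(u, v)})
      ({f : Sym2 V | f ∈ G.edgeSet ∧ v ∈ f} \ {s(u, v)}) := by
    rw [Set.disjoint_left]
    rintro f ⟨⟨hfE, hu⟩, hne⟩ ⟨⟨_, hv⟩, _⟩
    exact hne (edge_eq_of_two_mem hu hv h.ne)
  have h1 : ({f : Sym2 V | f ∈ G.edgeSet ∧ u ∈ f} \ {s(u, v)}).ncard = deg G u - 1 := by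
    rw [Set.ncard_diff_singleton_of_mem
      (show s(u, v) ∈ {f : Sym2 V | f ∈ G.edgeSet ∧ u ∈ f} from ⟨he, Sym2.mem_mk_left _ _⟩)
      , ncard_edgesAt]
  have h2 : ({f : Sym2 V | f ∈ G.edgeSet ∧ v ∈ f} \ {s(u, v)}).ncard = deg G v - 1 := by
    rw [Set.ncard_diff_singleton_of_mem
      (show s(u, v) ∈ {f : Sym2 V | f ∈ G.edgeSet ∧ v ∈ f} from ⟨he, Sym2.mem_mk_right _ _⟩)
      , ncard_edgesAt]
  have hu1 : 1 ≤ deg G u := one_le_deg h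
  have hv1 : 1 ≤ deg G v := one_le_deg h.symm
  rw [← Set.ncard_image_of_injective _ Subtype.val_injective, hval,
    Set.ncard_union_eq hdisj (Set.toFinite _) (Set.toFinite _), h1, h2]
  omega

lemma lineGraph_connected (hconn : G.Connected) (hE : G.edgeSet.Nonempty) :
    G.lineGraph.Connected := by
  have key : ∀ {a b : V}, G.Walk a b → ∀ (e f : G.edgeSet), a ∈ (e : Sym2 V) →
      b ∈ (f : Sym2 V) → G.lineGraph.Reachable e f := by
    intro a b p
    induction p with
    | nil =>
      intro e f ha hb
      by_cases hef : e = f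
      · exact hef ▸ SimpleGraph.Reachable.refl e
      · exact SimpleGraph.Adj.reachable
          (SimpleGraph.lineGraph_adj_iff_exists.mpr ⟨hef, _, ha, hb⟩)
    | @cons a c b hadj q ih =>
      intro e f ha hb
      have hg : s(a, c) ∈ G.edgeSet := G.mem_edgeSet.mpr hadj
      have h1 : G.lineGraph.Reachable e ⟨s(a, c), hg⟩ := by
        by_cases hef : e = ⟨s(a, c), hg⟩
        · exact hef ▸ SimpleGraph.Reachable.refl e
        · exact SimpleGraph.Adj.reachable
            (SimpleGraph.lineGraph_adj_iff_exists.mpr ⟨hef, a, ha, Sym2.mem_mk_left _ _⟩)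
      exact h1.trans (ih ⟨s(a, c), hg⟩ f (Sym2.mem_mk_right _ _) hb)
  rw [SimpleGraph.connected_iff]
  obtain ⟨e0, he0⟩ := hE
  refine ⟨?_, ⟨⟨e0, he0⟩⟩⟩
  intro e f
  obtain ⟨a, ha⟩ := exists_mem_sym2 (e : Sym2 V)
  obtain ⟨b, hb⟩ := exists_mem_sym2 (f : Sym2 V)
  exact key ((hconn a b).some) e f ha hb

lemma lineGraph_not_claw (G : SimpleGraph V) :
    ¬ Nonempty (G.lineGraph ≃g completeBipartiteGraph (Fin 1) (Fin 3)) := by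
  rintro ⟨φ⟩
  set ψ := φ.symm with hψdef
  have hadj : ∀ i : Fin 3, G.lineGraph.Adj (ψ (Sum.inl 0)) (ψ (Sum.inr i)) := by
    intro i
    exact ψ.map_rel_iff.mpr (by simp)
  have hpair : ∀ i j : Fin 3, i ≠ j → ∀ x : V, x ∈ (ψ (Sum.inr i) : Sym2 V) →
      x ∈ (ψ (Sum.inr j) : Sym2 V) → False := by
    intro i j hij x h1 h2
    have hne : ψ (Sum.inr i) ≠ ψ (Sum.inr j) := by
      intro hh
      exact hij (Sum.inr.inj (ψ.injective hh))
    have : G.lineGraph.Adj (ψ (Sum.inr i)) (ψ (Sum.inr j)) :=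
      SimpleGraph.lineGraph_adj_iff_exists.mpr ⟨hne, x, h1, h2⟩
    have := ψ.map_rel_iff.mp this
    simp at this
  obtain ⟨u, v, huv⟩ : ∃ u v, (ψ (Sum.inl 0) : Sym2 V) = s(u, v) := by
    induction (ψ (Sum.inl 0) : Sym2 V) with
    | _ a b => exact ⟨a, b, rfl⟩
  have hmem : ∀ i : Fin 3, u ∈ (ψ (Sum.inr i) : Sym2 V) ∨ v ∈ (ψ (Sum.inr i) : Sym2 V) := by
    intro i
    obtain ⟨-, x, hx1, hx2⟩ := SimpleGraph.lineGraph_adj_iff_exists.mp (hadj i)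
    rw [huv, Sym2.mem_iff] at hx1
    rcases hx1 with rfl | rfl
    · exact Or.inl hx2
    · exact Or.inr hx2
  rcases hmem 0 with h0 | h0 <;> rcases hmem 1 with h1 | h1 <;> rcases hmem 2 with h2 | h2
  · exact hpair 0 1 (by decide) u h0 h1
  · exact hpair 0 1 (by decide) u h0 h1
  · exact hpair 0 2 (by decide) u h0 h2
  · exact hpair 1 2 (by decide) v h1 h2
  · exact hpair 1 2 (by decide) u h1 h2
  · exact hpair 0 2 (by decide) v h0 h2
  · exact hpair 0 1 (by decide) v h0 h1
  · exact hpair 0 1 (by decide) v h0 h1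

end LG
section Count

variable {V : Type u} {G : SimpleGraph V} {u v x y : V} {f : Sym2 V}

lemma sym2_exists_rep (z : Sym2 V) : ∃ a b, z = s(a, b) := by
  induction z with
  | _ a b => exact ⟨a, b, rfl⟩

lemma no_leaf_edge [Finite V] (hconn : G.Connected) {w : V} (hw : 3 ≤ deg G w)
    (h : G.Adj u v) (hu : deg G u ≤ 1) (hv : deg G v ≤ 1) : False := by
  have hNu : G.neighborSet u = {v} := neighborSet_eq_singleton hu h
  have hNv : G.neighborSet v = {u} := neighborSet_eq_singleton hv h.symm
  have hcl : ∀ ⦃a b⦄, G.Adj a b → a ∈ ({u, v} : Set V) → b ∈ ({u, v} : Set V) := by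
    rintro a b hab (rfl | rfl)
    · have : b ∈ G.neighborSet a := hab
      rw [hNu] at this
      exact Or.inr this
    · have : b ∈ G.neighborSet a := hab
      rw [hNv] at this
      exact Or.inl this
  have hwmem := mem_closed hconn hcl (show u ∈ ({u, v} : Set V) from Or.inl rfl) w
  rcases hwmem with rfl | rfl
  · omega
  · omega

lemma degeneracy_count [Finite V] (G : SimpleGraph V) :
    ∀ (n : ℕ) (S : Set V), S.ncard ≤ n → S.Nonempty →
      (∀ T, T ⊆ S → T.Nonempty → ∃ v ∈ T, (G.neighborSet v ∩ T).ncard ≤ 1) →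
      {f : Sym2 V | f ∈ G.edgeSet ∧ ∀ x ∈ f, x ∈ S}.ncard + 1 ≤ S.ncard := by
  intro n
  induction n with
  | zero =>
    intro S h0 hne _
    have := (Set.ncard_pos (Set.toFinite S)).mpr hne
    omega
  | succ n ih =>
    intro S hcard hne hdeg
    obtain ⟨v, hv, hv1⟩ := hdeg S (le_refl S) hne
    have hEv : {f : Sym2 V | f ∈ G.edgeSet ∧ v ∈ f ∧ ∀ x ∈ f, x ∈ S}.ncard
        ≤ (G.neighborSet v ∩ S).ncard := by
      classical
      apply Set.ncard_le_ncard_of_injOn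
        (fun f => if h : ∃ w, f = s(v, w) ∧ w ∈ G.neighborSet v ∩ S then h.choose else v)
      · rintro f ⟨hfE, hvf, hall⟩
        have hex : ∃ w, f = s(v, w) ∧ w ∈ G.neighborSet v ∩ S := by
          obtain ⟨w, rfl, hadj⟩ := edge_eq hfE hvf
          exact ⟨w, rfl, hadj, hall w (Sym2.mem_mk_right _ _)⟩
        simp only [dif_pos hex]
        exact hex.choose_spec.2
      · rintro f1 h1 f2 h2 heq
        have hex1 : ∃ w, f1 = s(v, w) ∧ w ∈ G.neighborSet v ∩ S := by
          obtain ⟨hfE, hvf, hall⟩ := h1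
          obtain ⟨w, rfl, hadj⟩ := edge_eq hfE hvf
          exact ⟨w, rfl, hadj, hall w (Sym2.mem_mk_right _ _)⟩
        have hex2 : ∃ w, f2 = s(v, w) ∧ w ∈ G.neighborSet v ∩ S := by
          obtain ⟨hfE, hvf, hall⟩ := h2
          obtain ⟨w, rfl, hadj⟩ := edge_eq hfE hvf
          exact ⟨w, rfl, hadj, hall w (Sym2.mem_mk_right _ _)⟩
        simp only [dif_pos hex1, dif_pos hex2] at heq
        rw [hex1.choose_spec.1, hex2.choose_spec.1, heq]
    have hsub : {f : Sym2 V | f ∈ G.edgeSet ∧ ∀ x ∈ f, x ∈ S} ⊆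
        {f : Sym2 V | f ∈ G.edgeSet ∧ ∀ x ∈ f, x ∈ S \ {v}} ∪
        {f : Sym2 V | f ∈ G.edgeSet ∧ v ∈ f ∧ ∀ x ∈ f, x ∈ S} := by
      rintro f ⟨hfE, hall⟩
      by_cases hvf : v ∈ f
      · exact Or.inr ⟨hfE, hvf, hall⟩
      · exact Or.inl ⟨hfE, fun x hx => ⟨hall x hx, fun hxv => hvf (hxv ▸ hx)⟩⟩
    have hA := Set.ncard_le_ncard hsub (Set.toFinite _)
    have hB := Set.ncard_union_le {f : Sym2 V | f ∈ G.edgeSet ∧ ∀ x ∈ f, x ∈ S \ {v}}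
      {f : Sym2 V | f ∈ G.edgeSet ∧ v ∈ f ∧ ∀ x ∈ f, x ∈ S}
    have h1S : 1 ≤ S.ncard := (Set.ncard_pos (Set.toFinite S)).mpr hne
    by_cases hS' : (S \ {v}).Nonempty
    · have hcard' : (S \ {v}).ncard = S.ncard - 1 :=
        Set.ncard_diff_singleton_of_mem hv
      have ih' := ih (S \ {v}) (by omega) hS'
        (fun T hT hTne => hdeg T (hT.trans Set.diff_subset) hTne)
      omega
    · have hSv : S = {v} := by
        have hdiff : S \ {v} = ∅ := Set.not_nonempty_iff_eq_empty.mp hS'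
        exact Set.Subset.antisymm (Set.diff_eq_empty.mp hdiff) (Set.singleton_subset_iff.mpr hv)
      have hempty : {f : Sym2 V | f ∈ G.edgeSet ∧ ∀ x ∈ f, x ∈ S} = ∅ := by
        rw [Set.eq_empty_iff_forall_notMem]
        rintro f ⟨hfE, hall⟩
        obtain ⟨a, b, rfl⟩ := sym2_exists_rep f
        have ha : a ∈ S := hall a (Sym2.mem_mk_left _ _)
        have hb : b ∈ S := hall b (Sym2.mem_mk_right _ _)
        rw [hSv, Set.mem_singleton_iff] at ha hb
        subst ha; subst hb
        exact G.irrefl hfE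
      rw [hempty, Set.ncard_empty, hSv, Set.ncard_singleton]

lemma leafEdges_count [Finite V] [Nonempty V] (G : SimpleGraph V) :
    {f : Sym2 V | f ∈ G.edgeSet ∧ ∃ x ∈ f, deg G x = 1}.ncard ≤ {v : V | deg G v = 1}.ncard := by
  classical
  apply Set.ncard_le_ncard_of_injOn
    (fun f => if h : ∃ x ∈ f, deg G x = 1 then h.choose else Classical.arbitrary V)
  · rintro f ⟨hfE, hx⟩
    simp only [dif_pos hx]
    exact hx.choose_spec.2
  · rintro f1 ⟨hf1E, h1⟩ f2 ⟨hf2E, h2⟩ heq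
    simp only [dif_pos h1, dif_pos h2] at heq
    obtain ⟨y1, hf1, hadj1⟩ := edge_eq hf1E (heq ▸ h1.choose_spec.1)
    obtain ⟨y2, hf2, hadj2⟩ := edge_eq hf2E h2.choose_spec.1
    have hN : G.neighborSet h2.choose = {y2} :=
      neighborSet_eq_singleton (le_of_eq h2.choose_spec.2) hadj2
    have hy1 : y1 ∈ G.neighborSet h2.choose := hadj1
    rw [hN, Set.mem_singleton_iff] at hy1
    rw [hf1, hy1]
    exact hf2.symm

lemma exists_lineDeg_three [Finite V] (hconn : G.Connected) (hw : ∃ w, 3 ≤ deg G w)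
    (hclaw : ¬ Nonempty (G ≃g completeBipartiteGraph (Fin 1) (Fin 3))) :
    ∃ e : G.edgeSet, 3 ≤ (G.lineGraph.neighborSet e).ncard := by
  by_contra hcon
  push_neg at hcon
  obtain ⟨w, hw3⟩ := hw
  have hedge : ∀ a b, G.Adj a b → deg G a + deg G b ≤ 4 := by
    intro a b hab
    have he : s(a, b) ∈ G.edgeSet := hab
    have hlt := hcon ⟨s(a, b), he⟩
    rw [ncard_lineGraph_neighborSet] at hlt
    have := one_le_deg hab
    have := one_le_deg hab.symm
    omega
  have hnb : ∀ v, G.Adj w v → deg G v = 1 := by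
    intro v hv
    have := hedge w v hv
    have := one_le_deg hv.symm
    omega
  have hw3' : deg G w = 3 := by
    have hpos : (G.neighborSet w).Nonempty := by
      rw [← Set.ncard_pos (Set.toFinite _)]
      have : (0:ℕ) < 3 := by omega
      exact lt_of_lt_of_le this hw3
    obtain ⟨v, hv⟩ := hpos
    have := hedge w v hv
    have := one_le_deg (show G.Adj w v from hv).symm
    omega
  obtain ⟨a, b, c, hab, hac, hbc, hN⟩ := Set.ncard_eq_three.mp hw3'
  set abc : Fin 3 → V := ![a, b, c] with habc
  have haM : ∀ i, G.Adj w (abc i) := by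
    intro i
    have : abc i ∈ G.neighborSet w := by
      rw [hN]
      fin_cases i <;> simp [habc]
    exact this
  have hne_w : ∀ i, abc i ≠ w := fun i => (haM i).ne'
  have hleaf : ∀ i, deg G (abc i) = 1 := fun i => hnb _ (haM i)
  have hinj_abc : Function.Injective abc := by
    intro i j hij
    rw [habc] at hij
    fin_cases i <;> fin_cases j <;>
      first
        | rfl
        | exact absurd hij hab
        | exact absurd hij hac
        | exact absurd hij hbc
        | exact absurd hij.symm hab
        | exact absurd hij.symm hac
        | exact absurd hij.symm hbc
  set F : Fin 1 ⊕ Fin 3 → V := Sum.elim (fun _ => w) abc with hF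
  have hinj : Function.Injective F := by
    rintro (p | i) (q | j) h
    · rw [Subsingleton.elim p q]
    · exact absurd h.symm (hne_w j)
    · exact absurd h (hne_w i)
    · rw [hinj_abc h]
  have hsurj : Function.Surjective F := by
    have hcl : ∀ ⦃p q⦄, G.Adj p q → p ∈ insert w (G.neighborSet w) →
        q ∈ insert w (G.neighborSet w) := by
      rintro p q hpq (rfl | hp)
      · exact Or.inr hpq
      · have hdp : deg G p = 1 := hnb p hp
        have hNp : G.neighborSet p = {w} :=
          neighborSet_eq_singleton (le_of_eq hdp) ((show G.Adj w p from hp).symm)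
        have : q ∈ G.neighborSet p := hpq
        rw [hNp, Set.mem_singleton_iff] at this
        exact Or.inl this
    intro x
    have hx := mem_closed hconn hcl (Set.mem_insert w _) x
    rcases hx with rfl | hx
    · exact ⟨Sum.inl 0, rfl⟩
    · rw [hN] at hx
      rcases hx with rfl | rfl | rfl
      · exact ⟨Sum.inr 0, rfl⟩
      · exact ⟨Sum.inr 1, rfl⟩
      · exact ⟨Sum.inr 2, rfl⟩
  have hnadj : ∀ i j, ¬ G.Adj (abc i) (abc j) := by
    intro i j hadj
    have hNp : G.neighborSet (abc i) = {w} :=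
      neighborSet_eq_singleton (le_of_eq (hleaf i)) (haM i).symm
    have : abc j ∈ G.neighborSet (abc i) := hadj
    rw [hNp, Set.mem_singleton_iff] at this
    exact hne_w j this
  refine hclaw ⟨(RelIso.mk (Equiv.ofBijective F ⟨hinj, hsurj⟩) ?_).symm⟩
  rintro (p | i) (q | j)
  · exact iff_of_false (G.irrefl) (by simp)
  · exact iff_of_true (haM j) (by simp)
  · exact iff_of_true (haM i).symm (by simp)
  · exact iff_of_false (hnadj i j) (by simp)

end Count
section Classify

variable {V : Type u} {G : SimpleGraph V}

lemma fin_sub_val_eq_one_iff {n : ℕ} (hn : 2 ≤ n) (u v : Fin n) :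
    (u - v).val = 1 ↔ (u.val = v.val + 1 ∨ (u.val = 0 ∧ v.val = n - 1)) := by
  have hu := u.isLt
  have hv := v.isLt
  have hsub : (u - v).val = (n - v.val + u.val) % n := by rw [Fin.sub_def]
  rw [hsub]
  constructor
  · intro h
    by_cases hx : n - v.val + u.val < n
    · rw [Nat.mod_eq_of_lt hx] at h
      omega
    · rw [Nat.mod_eq_sub_mod (by omega), Nat.mod_eq_of_lt (by omega)] at h
      omega
  · rintro (h | ⟨h0, hv1⟩)
    · have hx : n - v.val + u.val = n + 1 := by omega
      rw [hx, Nat.add_mod_left]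
      exact Nat.mod_eq_of_lt (by omega)
    · have hx : n - v.val + u.val = 1 := by omega
      rw [hx]
      exact Nat.mod_eq_of_lt (by omega)

lemma path_or_cycle [Finite V] (hconn : G.Connected) (hdeg : ∀ v, deg G v ≤ 2) :
    (∃ n, Nonempty (G ≃g pathGraph n)) ∨ (∃ n, Nonempty (G ≃g cycleGraph n)) := by
  classical
  cases nonempty_fintype V
  obtain ⟨v0⟩ := hconn.nonempty
  set P : Set ℕ := {l | ∃ (a b : V) (p : G.Walk a b), p.IsPath ∧ p.length = l} with hPdef
  have hPne : P.Nonempty := ⟨0, v0, v0, SimpleGraph.Walk.nil, SimpleGraph.Walk.IsPath.nil, rfl⟩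
  have hPbdd : BddAbove P := by
    refine ⟨Fintype.card V, ?_⟩
    rintro l ⟨a, b, p, hp, rfl⟩
    exact le_of_lt hp.length_lt
  obtain ⟨a, b, p, hp, hlen⟩ := Nat.sSup_mem hPne hPbdd
  set m := sSup P with hm
  have hmaxle : ∀ l ∈ P, l ≤ m := fun l hl => le_csSup hPbdd hl
  have hnd : p.support.Nodup := hp.support_nodup
  have hlensupp : p.support.length = m + 1 := by
    rw [SimpleGraph.Walk.length_support, hlen]
  have hadj_get : ∀ (i : ℕ) (h : i < m),
      G.Adj (p.support.get ⟨i, by omega⟩) (p.support.get ⟨i + 1, by omega⟩) := by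
    intro i h
    exact (SimpleGraph.Walk.isChain_adj_support p).getElem i (by omega)
  have hget_inj : ∀ (i j : Fin p.support.length), p.support.get i = p.support.get j → i = j :=
    fun i j h => List.nodup_iff_injective_get.mp hnd h
  have hpin : ∀ (i : ℕ) (h0 : 0 < i) (hiM : i < m) (z : V),
      G.Adj (p.support.get ⟨i, by omega⟩) z →
      z = p.support.get ⟨i - 1, by omega⟩ ∨ z = p.support.get ⟨i + 1, by omega⟩ := by
    intro i h0 hiM z hz
    have h1 : G.Adj (p.support.get ⟨i, by omega⟩) (p.support.get ⟨i - 1, by omega⟩) := by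
      have hthis := hadj_get (i - 1) (by omega)
      have hieq : i - 1 + 1 = i := by omega
      simp only [hieq] at hthis
      exact hthis.symm
    have h2 : G.Adj (p.support.get ⟨i, by omega⟩) (p.support.get ⟨i + 1, by omega⟩) :=
      hadj_get i hiM
    have hne : p.support.get ⟨i - 1, by omega⟩ ≠ p.support.get ⟨i + 1, by omega⟩ := by
      intro hcon
      have h3 := hget_inj _ _ hcon
      rw [Fin.mk.injEq] at h3
      omega
    have hNeq := neighborSet_eq_pair (hdeg _) h1 h2 hne
    have hzmem : z ∈ G.neighborSet (p.support.get ⟨i, by omega⟩) := hz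
    rw [hNeq] at hzmem
    exact hzmem
  have hsupp : ∀ v : V, v ∈ p.support := by
    by_contra hcon
    push_neg at hcon
    obtain ⟨w0, hw0⟩ := hcon
    have hcross : ∃ x y, G.Adj x y ∧ x ∈ p.support ∧ y ∉ p.support := by
      have key : ∀ {s t : V} (q : G.Walk s t), s ∈ p.support → t ∉ p.support →
          ∃ x y, G.Adj x y ∧ x ∈ p.support ∧ y ∉ p.support := by
        intro s t q
        induction q with
        | nil => exact fun hs ht => absurd hs ht
        | @cons s c t hadj q ih =>
          intro hs ht
          by_cases hc : c ∈ p.support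
          · exact ih hc ht
          · exact ⟨s, c, hadj, hs, hc⟩
      exact key ((hconn a w0).some) p.start_mem_support hw0
    obtain ⟨x, y, hxy, hx, hy⟩ := hcross
    obtain ⟨k, hk, hkeq⟩ := List.mem_iff_getElem.mp hx
    have hkeq' : p.support.get ⟨k, hk⟩ = x := hkeq
    by_cases hI : 0 < k ∧ k < m
    · have hzz := hpin k hI.1 hI.2 y (by rw [hkeq']; exact hxy)
      rcases hzz with h | h
      · exact hy (h ▸ List.get_mem _ _)
      · exact hy (h ▸ List.get_mem _ _)
    · have hkcase : k = 0 ∨ k = m := by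
        rw [hlensupp] at hk
        omega
      rcases hkcase with rfl | rfl
      · have hxa : x = a := by
          rw [← hkeq', List.get_eq_getElem, List.getElem_zero]
          exact SimpleGraph.Walk.head_support p
        subst hxa
        have hnp : (SimpleGraph.Walk.cons hxy.symm p).IsPath := hp.cons hy
        have hmem : (SimpleGraph.Walk.cons hxy.symm p).length ∈ P :=
          ⟨y, b, _, hnp, rfl⟩
        have hle := hmaxle _ hmem
        rw [SimpleGraph.Walk.length_cons, hlen] at hle
        omega
      · have hxb : x = b := by
          rw [← hkeq']
          have hmm : (⟨m, hk⟩ : Fin p.support.length) = ⟨p.support.length - 1, by omega⟩ := by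
            rw [Fin.mk.injEq]
            omega
          rw [hmm, List.get_length_sub_one, SimpleGraph.Walk.getLast_support]
        subst hxb
        have hnp : (SimpleGraph.Walk.cons hxy.symm p.reverse).IsPath := by
          apply hp.reverse.cons
          rw [SimpleGraph.Walk.support_reverse, List.mem_reverse]
          exact hy
        have hmem : (SimpleGraph.Walk.cons hxy.symm p.reverse).length ∈ P :=
          ⟨y, a, _, hnp, rfl⟩
        have hle := hmaxle _ hmem
        rw [SimpleGraph.Walk.length_cons, SimpleGraph.Walk.length_reverse, hlen] at hle
        omega
  set vtx : Fin (m + 1) → V := fun i => p.support.get (Fin.cast hlensupp.symm i) with hvtxdef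
  have hvtx_inj : Function.Injective vtx := by
    intro i j hij
    have h3 := hget_inj _ _ hij
    have h4 := congrArg Fin.val h3
    simp only [Fin.coe_cast] at h4
    exact Fin.ext h4
  have hvtx_surj : Function.Surjective vtx := by
    intro z
    obtain ⟨k, hk, hkeq⟩ := List.mem_iff_getElem.mp (hsupp z)
    refine ⟨⟨k, by omega⟩, ?_⟩
    exact hkeq
  have hvtx_adj : ∀ (i : ℕ) (h : i < m),
      G.Adj (vtx ⟨i, by omega⟩) (vtx ⟨i + 1, by omega⟩) := fun i h => hadj_get i h
  have claim : ∀ i j : Fin (m + 1), G.Adj (vtx i) (vtx j) →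
      (j.val = i.val + 1 ∨ i.val = j.val + 1) ∨
      ((i.val = 0 ∧ j.val = m) ∨ (i.val = m ∧ j.val = 0)) := by
    intro i j hij
    have hine : i.val ≠ j.val := by
      intro h
      exact G.irrefl ((Fin.ext h : i = j) ▸ hij)
    have hi' := i.isLt
    have hj' := j.isLt
    by_cases hI : 0 < i.val ∧ i.val < m
    · have hzz := hpin i.val hI.1 hI.2 (vtx j) hij
      left
      rcases hzz with h | h
      · right
        have h5 : j = ⟨i.val - 1, by omega⟩ :=
          hvtx_inj (show vtx j = vtx ⟨i.val - 1, by omega⟩ from h)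
        have h6 := congrArg Fin.val h5
        simp only at h6
        omega
      · left
        have h5 : j = ⟨i.val + 1, by omega⟩ :=
          hvtx_inj (show vtx j = vtx ⟨i.val + 1, by omega⟩ from h)
        have h6 := congrArg Fin.val h5
        simp only at h6
        omega
    · by_cases hJ : 0 < j.val ∧ j.val < m
      · have hzz := hpin j.val hJ.1 hJ.2 (vtx i) hij.symm
        left
        rcases hzz with h | h
        · left
          have h5 : i = ⟨j.val - 1, by omega⟩ :=
            hvtx_inj (show vtx i = vtx ⟨j.val - 1, by omega⟩ from h)
          have h6 := congrArg Fin.val h5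
          simp only at h6
          omega
        · right
          have h5 : i = ⟨j.val + 1, by omega⟩ :=
            hvtx_inj (show vtx i = vtx ⟨j.val + 1, by omega⟩ from h)
          have h6 := congrArg Fin.val h5
          simp only at h6
          omega
      · right
        omega
  by_cases hcyc : 2 ≤ m ∧ G.Adj (vtx ⟨0, by omega⟩) (vtx ⟨m, by omega⟩)
  · right
    refine ⟨m + 1, ⟨(RelIso.mk (Equiv.ofBijective vtx ⟨hvtx_inj, hvtx_surj⟩) ?_).symm⟩⟩
    intro i j
    show G.Adj (vtx i) (vtx j) ↔ (cycleGraph (m + 1)).Adj i j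
    have hi' := i.isLt
    have hj' := j.isLt
    rw [SimpleGraph.cycleGraph_adj']
    constructor
    · intro h
      rcases claim i j h with (hc | hc) | (hc | hc)
      · right
        rw [fin_sub_val_eq_one_iff (by omega)]
        left
        exact hc
      · left
        rw [fin_sub_val_eq_one_iff (by omega)]
        left
        exact hc
      · left
        rw [fin_sub_val_eq_one_iff (by omega)]
        right
        omega
      · right
        rw [fin_sub_val_eq_one_iff (by omega)]
        right
        omega
    · intro h
      rcases h with h | h
      · rw [fin_sub_val_eq_one_iff (by omega)] at h
        rcases h with h | ⟨h0, hm'⟩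
        · have ha := hvtx_adj j.val (by omega)
          have e1 : (⟨j.val, by omega⟩ : Fin (m + 1)) = j := Fin.ext rfl
          have e2 : (⟨j.val + 1, by omega⟩ : Fin (m + 1)) = i := Fin.ext (show j.val + 1 = i.val by omega)
          rw [e1, e2] at ha
          exact ha.symm
        · have e1 : (⟨0, by omega⟩ : Fin (m + 1)) = i := Fin.ext (show 0 = i.val by omega)
          have e2 : (⟨m, by omega⟩ : Fin (m + 1)) = j := Fin.ext (show m = j.val by omega)
          rw [e1, e2] at hcyc
          exact hcyc.2
      · rw [fin_sub_val_eq_one_iff (by omega)] at h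
        rcases h with h | ⟨h0, hm'⟩
        · have ha := hvtx_adj i.val (by omega)
          have e1 : (⟨i.val, by omega⟩ : Fin (m + 1)) = i := Fin.ext rfl
          have e2 : (⟨i.val + 1, by omega⟩ : Fin (m + 1)) = j := Fin.ext (show i.val + 1 = j.val by omega)
          rw [e1, e2] at ha
          exact ha
        · have e1 : (⟨0, by omega⟩ : Fin (m + 1)) = j := Fin.ext (show 0 = j.val by omega)
          have e2 : (⟨m, by omega⟩ : Fin (m + 1)) = i := Fin.ext (show m = i.val by omega)
          rw [e1, e2] at hcyc
          exact hcyc.2.symm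
  · left
    refine ⟨m + 1, ⟨(RelIso.mk (Equiv.ofBijective vtx ⟨hvtx_inj, hvtx_surj⟩) ?_).symm⟩⟩
    intro i j
    show G.Adj (vtx i) (vtx j) ↔ (pathGraph (m + 1)).Adj i j
    have hi' := i.isLt
    have hj' := j.isLt
    rw [SimpleGraph.pathGraph_adj]
    constructor
    · intro h
      have hine : i.val ≠ j.val := by
        intro hh
        exact G.irrefl ((Fin.ext hh : i = j) ▸ h)
      rcases claim i j h with (hc | hc) | (hc | hc)
      · left
        omega
      · right
        omega
      · have hadj0m : G.Adj (vtx ⟨0, by omega⟩) (vtx ⟨m, by omega⟩) := by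
          have e1 : i = ⟨0, by omega⟩ := Fin.ext hc.1
          have e2 : j = ⟨m, by omega⟩ := Fin.ext hc.2
          rw [← e1, ← e2]
          exact h
        have hm1 : m ≤ 1 := by
          by_contra hh
          exact hcyc ⟨by omega, hadj0m⟩
        left
        omega
      · have hadj0m : G.Adj (vtx ⟨0, by omega⟩) (vtx ⟨m, by omega⟩) := by
          have e1 : j = ⟨0, by omega⟩ := Fin.ext hc.2
          have e2 : i = ⟨m, by omega⟩ := Fin.ext hc.1
          rw [← e1, ← e2]
          exact h.symm
        have hm1 : m ≤ 1 := by
          by_contra hh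
          exact hcyc ⟨by omega, hadj0m⟩
        right
        omega
    · intro h
      rcases h with h | h
      · have ha := hvtx_adj i.val (by omega)
        have e1 : (⟨i.val, by omega⟩ : Fin (m + 1)) = i := Fin.ext rfl
        have e2 : (⟨i.val + 1, by omega⟩ : Fin (m + 1)) = j := Fin.ext (show i.val + 1 = j.val by omega)
        rw [e1, e2] at ha
        exact ha
      · have ha := hvtx_adj j.val (by omega)
        have e1 : (⟨j.val, by omega⟩ : Fin (m + 1)) = j := Fin.ext rfl
        have e2 : (⟨j.val + 1, by omega⟩ : Fin (m + 1)) = i := Fin.ext (show j.val + 1 = i.val by omega)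
        rw [e1, e2] at ha
        exact ha.symm

end Classify
section Main

variable {V : Type u} {G : SimpleGraph V}

lemma hdpos [Finite V] (hconn : G.Connected) {w : V} (hw : 3 ≤ deg G w) (v : V) :
    1 ≤ deg G v := by
  by_contra hcon
  have h0 : deg G v = 0 := by omega
  have hNe : G.neighborSet v = ∅ := by
    rw [deg] at h0
    exact (Set.ncard_eq_zero (Set.toFinite _)).mp h0
  have hcl : ∀ ⦃a b⦄, G.Adj a b → a ∈ ({v} : Set V) → b ∈ ({v} : Set V) := by
    rintro a b hab rfl
    have : b ∈ G.neighborSet a := hab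
    rw [hNe] at this
    exact absurd this (Set.notMem_empty b)
  have := mem_closed hconn hcl (Set.mem_singleton v) w
  rw [Set.mem_singleton_iff] at this
  subst this
  omega

lemma step [Finite V] (hconn : G.Connected) (hw : ∃ w, 3 ≤ deg G w)
    (hclaw : ¬ Nonempty (G ≃g completeBipartiteGraph (Fin 1) (Fin 3)))
    (hB : {v : V | deg G v ≤ 2}.Nonempty) :
    G.lineGraph.Connected ∧ (∃ e, 3 ≤ deg G.lineGraph e) ∧
    2 * {e : G.edgeSet | deg G.lineGraph e ≤ 2}.ncard
        + {e : G.edgeSet | deg G.lineGraph e = 1}.ncard <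
      2 * {v : V | deg G v ≤ 2}.ncard + {v : V | deg G v = 1}.ncard := by
  obtain ⟨w, hw3⟩ := hw
  have hne : Nonempty V := hconn.nonempty
  have hEne : G.edgeSet.Nonempty := by
    have hpos : (G.neighborSet w).Nonempty := by
      have h0 : 0 < deg G w := by omega
      rw [deg] at h0
      exact (Set.ncard_pos (Set.toFinite _)).mp h0
    obtain ⟨v, hv⟩ := hpos
    exact ⟨s(w, v), hv⟩
  refine ⟨lineGraph_connected hconn hEne, exists_lineDeg_three hconn ⟨w, hw3⟩ hclaw, ?_⟩
  set D1 : Set V := {v : V | deg G v = 1} with hD1def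
  set D2 : Set V := {v : V | deg G v = 2} with hD2def
  set L1 : Set (Sym2 V) := {f : Sym2 V | f ∈ G.edgeSet ∧ ∃ x ∈ f, deg G x = 1} with hL1def
  set T2 : Set (Sym2 V) := {f : Sym2 V | f ∈ G.edgeSet ∧ ∀ x ∈ f, x ∈ D2} with hT2def
  -- bad vertices of the line graph inject into L1 ∪ T2
  have himg : Subtype.val '' {e : G.edgeSet | deg G.lineGraph e ≤ 2} ⊆ L1 ∪ T2 := by
    rintro f ⟨⟨f', hfE⟩, he, rfl⟩
    obtain ⟨u, v, rfl⟩ := sym2_exists_rep f'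
    have hadj : G.Adj u v := G.mem_edgeSet.mp hfE
    rw [Set.mem_setOf_eq, deg, ncard_lineGraph_neighborSet] at he
    have h1 := one_le_deg hadj
    have h2 := one_le_deg hadj.symm
    by_cases hu1 : deg G u = 1 ∨ deg G v = 1
    · rcases hu1 with h | h
      · exact Or.inl ⟨hfE, u, Sym2.mem_mk_left _ _, h⟩
      · exact Or.inl ⟨hfE, v, Sym2.mem_mk_right _ _, h⟩
    · push_neg at hu1
      have hu2 : deg G u = 2 := by omega
      have hv2 : deg G v = 2 := by omega
      refine Or.inr ⟨hfE, ?_⟩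
      intro x hx
      rcases Sym2.mem_iff.mp hx with rfl | rfl
      · exact hu2
      · exact hv2
  have himgleaf : Subtype.val '' {e : G.edgeSet | deg G.lineGraph e = 1} ⊆ L1 := by
    rintro f ⟨⟨f', hfE⟩, he, rfl⟩
    obtain ⟨u, v, rfl⟩ := sym2_exists_rep f'
    have hadj : G.Adj u v := G.mem_edgeSet.mp hfE
    rw [Set.mem_setOf_eq, deg, ncard_lineGraph_neighborSet] at he
    have h1 := one_le_deg hadj
    have h2 := one_le_deg hadj.symm
    have hno : ¬ (deg G u = 1 ∧ deg G v = 1) := by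
      rintro ⟨ha, hb⟩
      exact no_leaf_edge hconn hw3 hadj (le_of_eq ha) (le_of_eq hb)
    have : deg G u = 1 ∨ deg G v = 1 := by omega
    rcases this with h | h
    · exact ⟨hfE, u, Sym2.mem_mk_left _ _, h⟩
    · exact ⟨hfE, v, Sym2.mem_mk_right _ _, h⟩
  have hL1card : L1.ncard ≤ D1.ncard := leafEdges_count G
  have hBadL : {e : G.edgeSet | deg G.lineGraph e ≤ 2}.ncard ≤ L1.ncard + T2.ncard := by
    rw [← Set.ncard_image_of_injective _ Subtype.val_injective]
    exact le_trans (Set.ncard_le_ncard himg (Set.toFinite _)) (Set.ncard_union_le _ _)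
  have hLeafL : {e : G.edgeSet | deg G.lineGraph e = 1}.ncard ≤ L1.ncard := by
    rw [← Set.ncard_image_of_injective _ Subtype.val_injective]
    exact Set.ncard_le_ncard himgleaf (Set.toFinite _)
  have hBsplit : {v : V | deg G v ≤ 2}.ncard = D1.ncard + D2.ncard := by
    have hsplit : {v : V | deg G v ≤ 2} = D1 ∪ D2 := by
      ext z
      simp only [hD1def, hD2def, Set.mem_setOf_eq, Set.mem_union]
      have := hdpos hconn hw3 z
      omega
    have hdisj : Disjoint D1 D2 := by
      rw [Set.disjoint_left]
      intro z h1 h2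
      rw [hD1def, Set.mem_setOf_eq] at h1
      rw [hD2def, Set.mem_setOf_eq] at h2
      omega
    rw [hsplit, Set.ncard_union_eq hdisj (Set.toFinite _) (Set.toFinite _)]
  by_cases hD2ne : D2.Nonempty
  · have hT2card : T2.ncard + 1 ≤ D2.ncard := by
      apply degeneracy_count G D2.ncard D2 le_rfl hD2ne
      intro T hT hTne
      by_contra hcc
      push_neg at hcc
      have hTcl : ∀ ⦃p q⦄, G.Adj p q → p ∈ T → q ∈ T := by
        intro p q hpq hp
        have hdp : deg G p = 2 := hT hp
        have hle := hcc p hp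
        have hinter : G.neighborSet p ∩ T = G.neighborSet p := by
          apply Set.eq_of_subset_of_ncard_le Set.inter_subset_left _ (Set.toFinite _)
          rw [deg] at hdp
          omega
        have : q ∈ G.neighborSet p ∩ T := by
          rw [hinter]
          exact hpq
        exact this.2
      obtain ⟨t0, ht0⟩ := hTne
      have hwT := mem_closed hconn hTcl ht0 w
      have := hT hwT
      rw [hD2def, Set.mem_setOf_eq] at this
      omega
    omega
  · have hT2e : T2.ncard = 0 := by
      have : T2 = ∅ := by
        rw [Set.eq_empty_iff_forall_notMem]
        rintro f ⟨hfE, hall⟩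
        obtain ⟨u, v, rfl⟩ := sym2_exists_rep f
        exact hD2ne ⟨u, hall u (Sym2.mem_mk_left _ _)⟩
      rw [this, Set.ncard_empty]
    have hLeafLe : {e : G.edgeSet | deg G.lineGraph e = 1}.ncard = 0 := by
      have himgempty : {e : G.edgeSet | deg G.lineGraph e = 1} = ∅ := by
        rw [Set.eq_empty_iff_forall_notMem]
        rintro ⟨f', hfE⟩ he
        obtain ⟨u, v, rfl⟩ := sym2_exists_rep f'
        have hadj : G.Adj u v := G.mem_edgeSet.mp hfE
        rw [Set.mem_setOf_eq, deg, ncard_lineGraph_neighborSet] at he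
        have h1 := one_le_deg hadj
        have h2 := one_le_deg hadj.symm
        have hno : ¬ (deg G u = 1 ∧ deg G v = 1) := by
          rintro ⟨ha, hb⟩
          exact no_leaf_edge hconn hw3 hadj (le_of_eq ha) (le_of_eq hb)
        have h3 : deg G u = 2 ∨ deg G v = 2 := by omega
        rcases h3 with h | h
        · exact hD2ne ⟨u, h⟩
        · exact hD2ne ⟨v, h⟩
      rw [himgempty, Set.ncard_empty]
    have hD1pos : 1 ≤ D1.ncard := by
      obtain ⟨z, hz⟩ := hB
      rw [Set.mem_setOf_eq] at hz
      have hz1 := hdpos hconn hw3 z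
      have hz2 : deg G z ≠ 2 := by
        intro h
        exact hD2ne ⟨z, h⟩
      have : z ∈ D1 := by
        rw [hD1def, Set.mem_setOf_eq]
        omega
      have := (Set.ncard_pos (Set.toFinite _)).mpr ⟨z, this⟩
      omega
    omega

lemma iter_shift (G : SimpleGraph V) : ∀ k, iterLineGraph G (k + 1) = iterLineGraph G.lineGraph k := by
  intro k
  induction k with
  | zero => rfl
  | succ k ih =>
    show (⟨(iterLineGraph G (k + 1)).2.edgeSet, (iterLineGraph G (k + 1)).2.lineGraph⟩ :
        Σ W : Type u, SimpleGraph W) = iterLineGraph G.lineGraph (k + 1)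
    rw [ih]
    rfl

lemma key : ∀ (N : ℕ) {V : Type u} [Finite V] (G : SimpleGraph V),
    2 * {v : V | deg G v ≤ 2}.ncard + {v : V | deg G v = 1}.ncard ≤ N →
    G.Connected → (∃ w, 3 ≤ deg G w) →
    ¬ Nonempty (G ≃g completeBipartiteGraph (Fin 1) (Fin 3)) →
    ∃ k : ℕ, ∀ w : (iterLineGraph G k).1, 3 ≤ ((iterLineGraph G k).2.neighborSet w).ncard := by
  intro N
  induction N with
  | zero =>
    intro V _ G hmu hconn hw hclaw
    refine ⟨0, fun w => ?_⟩
    have hBe : {v : V | deg G v ≤ 2}.ncard = 0 := by omega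
    have hBee : {v : V | deg G v ≤ 2} = ∅ := (Set.ncard_eq_zero (Set.toFinite _)).mp hBe
    have hwB : w ∉ {v : V | deg G v ≤ 2} := by
      rw [hBee]
      exact Set.notMem_empty w
    have h3 : 3 ≤ deg G w := by
      by_contra hc
      exact hwB (show deg G w ≤ 2 by omega)
    exact h3
  | succ N ih =>
    intro V _ G hmu hconn hw hclaw
    by_cases hB : {v : V | deg G v ≤ 2}.Nonempty
    · obtain ⟨hconn', hw', hlt⟩ := step hconn hw hclaw hB
      obtain ⟨k, hk⟩ := ih G.lineGraph (by omega) hconn' hw' (lineGraph_not_claw G)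
      refine ⟨k + 1, ?_⟩
      rw [iter_shift]
      exact hk
    · refine ⟨0, fun w => ?_⟩
      have hwB : w ∉ {v : V | deg G v ≤ 2} := fun h => hB ⟨w, h⟩
      have h3 : 3 ≤ deg G w := by
        by_contra hc
        exact hwB (show deg G w ≤ 2 by omega)
      exact h3

end Main

end IterLG

open IterLG in
/-- If `G` is a finite connected simple graph which is not a path, not a cycle and not the claw
`K_{1,3}`, then some iterated line graph `L^k(G)` has minimum degree `δ(L^k(G)) ≥ 3`. -/
theorem iterLineGraph_minDegree_ge_three {V : Type u} [Fintype V] (G : SimpleGraph V)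
    (hconn : G.Connected)
    (hpath : ¬ ∃ n : ℕ, Nonempty (G ≃g pathGraph n))
    (hcycle : ¬ ∃ n : ℕ, Nonempty (G ≃g cycleGraph n))
    (hclaw : ¬ Nonempty (G ≃g completeBipartiteGraph (Fin 1) (Fin 3))) :
    ∃ k : ℕ, ∀ w : (iterLineGraph G k).1,
      3 ≤ ((iterLineGraph G k).2.neighborSet w).ncard := by
  have hw : ∃ w, 3 ≤ IterLG.deg G w := by
    by_contra hcon
    push_neg at hcon
    rcases IterLG.path_or_cycle hconn (fun v => by have := hcon v; omega) with h | h
    · exact hpath h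
    · exact hcycle h
  exact IterLG.key (2 * {v : V | IterLG.deg G v ≤ 2}.ncard + {v : V | IterLG.deg G v = 1}.ncard)
    G le_rfl hconn hw hclaw
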